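/- Let G be a group and μ a finitely additive conjugation-invariant probability measure on G \ {1}, and let N = {g : μ(C_G(g) \ {1}) = 1} ∪ {1}. If G is icc and N ≠ {1}, then the centralizer in G of every finite subset of N is infinite. -/

import Mathlib

open Filter Topology

/-- A finitely additive conjugation-invariant probability measure (mean)
on `G \ {1}`. -/
structure ConjInvMean (G : Type*) [Group G] where
  μ : Set G → ℝ
  nonneg : ∀ A : Set G, A ⊆ {g : G | g ≠ 1} → 0 ≤ μ A
  total : μ {g : G | g ≠ 1} = 1
  additive : ∀ A B : Set G, A ⊆ {g : G | g ≠ 1} → B ⊆ {g : G | g ≠ 1} →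
    Disjoint A B → μ (A ∪ B) = μ A + μ B
  conj_inv : ∀ (g : G) (A : Set G), A ⊆ {h : G | h ≠ 1} →
    μ ((fun x => g * x * g⁻¹) '' A) = μ A

/-- The set `N = {g : μ(C_G(g) \ {1}) = 1} ∪ {1}`. -/
def Nset {G : Type*} [Group G] (m : ConjInvMean G) : Set G :=
  {g : G | m.μ ((Subgroup.centralizer {g} : Set G) \ {1}) = 1} ∪ {1}

section Aux

variable {G : Type*} [Group G] (m : ConjInvMean G)

lemma mean_empty : m.μ ∅ = 0 := by
  have h := m.additive ∅ ∅ (by simp) (by simp) (by simp)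
  simp only [Set.union_empty] at h
  linarith

lemma mean_mono {A B : Set G} (hB : B ⊆ {g : G | g ≠ 1}) (hAB : A ⊆ B) :
    m.μ A ≤ m.μ B := by
  have h1 : m.μ (A ∪ (B \ A)) = m.μ A + m.μ (B \ A) :=
    m.additive _ _ (hAB.trans hB) (Set.diff_subset.trans hB) disjoint_sdiff_self_right
  have h2 : A ∪ (B \ A) = B := Set.union_diff_cancel hAB
  have h3 := m.nonneg (B \ A) (Set.diff_subset.trans hB)
  rw [h2] at h1
  linarith

lemma mean_le_one {A : Set G} (hA : A ⊆ {g : G | g ≠ 1}) : m.μ A ≤ 1 := by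
  have := mean_mono m (B := {g : G | g ≠ 1}) subset_rfl hA
  rw [m.total] at this
  exact this

lemma mean_inter {A B : Set G} (hA : A ⊆ {g : G | g ≠ 1}) (hB : B ⊆ {g : G | g ≠ 1})
    (h1 : m.μ A = 1) (h2 : m.μ B = 1) : m.μ (A ∩ B) = 1 := by
  have hd : m.μ ((A ∩ B) ∪ (A \ B)) = m.μ (A ∩ B) + m.μ (A \ B) :=
    m.additive _ _ (Set.inter_subset_left.trans hA) (Set.diff_subset.trans hA)
      (Set.disjoint_of_subset_left Set.inter_subset_right disjoint_sdiff_self_right)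
  rw [Set.inter_union_diff] at hd
  have hu : m.μ (B ∪ (A \ B)) = m.μ B + m.μ (A \ B) :=
    m.additive _ _ hB (Set.diff_subset.trans hA) disjoint_sdiff_self_right
  have hle : m.μ (B ∪ (A \ B)) ≤ 1 :=
    mean_le_one m (Set.union_subset hB (Set.diff_subset.trans hA))
  have hnn := m.nonneg (A \ B) (Set.diff_subset.trans hA)
  linarith

lemma mean_finite_false
    (hicc : ∀ g : G, g ≠ 1 → {x : G | ∃ h : G, h * g * h⁻¹ = x}.Infinite)
    {A : Set G} (hA : A ⊆ {g : G | g ≠ 1}) (hfin : A.Finite) (h1 : m.μ A = 1) :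
    False := by
  classical
  set 𝒞 : Set (Set G) := {C | C ⊆ A ∧ m.μ C = 1} with h𝒞
  set S : Set ℕ := {n | ∃ C ∈ 𝒞, C.ncard = n} with hS
  have hSne : S.Nonempty := ⟨A.ncard, A, ⟨subset_rfl, h1⟩, rfl⟩
  obtain ⟨C, hC𝒞, hCcard⟩ : ∃ C ∈ 𝒞, C.ncard = sInf S := Nat.sInf_mem hSne
  have hCA : C ⊆ A := hC𝒞.1
  have hCfin : C.Finite := hfin.subset hCA
  -- C is contained in every conjugate of A
  have hconj : ∀ k : G, C ⊆ (fun x => k * x * k⁻¹) '' A := by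
    intro k
    have himg : (fun x => k * x * k⁻¹) '' A ⊆ {g : G | g ≠ 1} := by
      rintro _ ⟨a, ha, rfl⟩
      have : a ≠ 1 := hA ha
      simp only [Set.mem_setOf_eq]
      intro h
      apply this
      have := congrArg (fun y => k⁻¹ * y * k) h
      simpa [mul_assoc] using this
    have hμimg : m.μ ((fun x => k * x * k⁻¹) '' A) = 1 := by
      rw [m.conj_inv k A hA]; exact h1
    set D := C ∩ ((fun x => k * x * k⁻¹) '' A) with hD
    have hD𝒞 : D ∈ 𝒞 :=
      ⟨Set.inter_subset_left.trans hCA,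
        mean_inter m (hCA.trans hA) himg hC𝒞.2 hμimg⟩
    have hle : sInf S ≤ D.ncard := Nat.sInf_le ⟨D, hD𝒞, rfl⟩
    have hge : D.ncard ≤ C.ncard := Set.ncard_le_ncard Set.inter_subset_left hCfin
    have hDC : D = C :=
      Set.eq_of_subset_of_ncard_le Set.inter_subset_left (by omega) hCfin
    intro x hx
    rw [← hDC] at hx
    exact hx.2
  -- C is nonempty
  have hCne : C.Nonempty := by
    rcases Set.eq_empty_or_nonempty C with h | h
    · exfalso
      have h2 : m.μ C = 1 := hC𝒞.2
      rw [h, mean_empty m] at h2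
      exact one_ne_zero h2.symm
    · exact h
  obtain ⟨c, hc⟩ := hCne
  have hc1 : c ≠ 1 := hA (hCA hc)
  have hclass : {x : G | ∃ h : G, h * c * h⁻¹ = x} ⊆ A := by
    rintro _ ⟨h, rfl⟩
    obtain ⟨a, ha, hac⟩ := hconj h⁻¹ hc
    have : a = h * c * h⁻¹ := by
      have := congrArg (fun y => h * y * h⁻¹) hac
      simpa [mul_assoc] using this
    rwa [← this]
  exact hicc c hc1 (hfin.subset hclass)

lemma mean_centralizer_of_mem_Nset {a : G} (ha : a ∈ Nset m) :
    m.μ ({g : G | g ≠ 1} ∩ (Subgroup.centralizer {a} : Set G)) = 1 := by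
  rcases ha with ha | ha
  · have : {g : G | g ≠ 1} ∩ (Subgroup.centralizer {a} : Set G)
        = (Subgroup.centralizer {a} : Set G) \ {1} := by
      ext g
      simp only [Set.mem_inter_iff, Set.mem_setOf_eq, Set.mem_diff,
        Set.mem_singleton_iff]
      tauto
    rw [this]
    exact ha
  · have ha1 : a = 1 := ha
    have : {g : G | g ≠ 1} ∩ (Subgroup.centralizer {a} : Set G) = {g : G | g ≠ 1} := by
      ext g
      simp [ha1, Subgroup.mem_centralizer_singleton_iff]
    rw [this]
    exact m.total

end Aux

lemma mean_biInter {G : Type*} [Group G] (m : ConjInvMean G) (F : Finset G)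
    (hFN : (F : Set G) ⊆ Nset m) :
    m.μ ({g : G | g ≠ 1} ∩ ⋂ h ∈ F, (Subgroup.centralizer {h} : Set G)) = 1 := by
  classical
  induction F using Finset.induction_on with
  | empty =>
    have he : ({g : G | g ≠ 1} ∩ ⋂ h ∈ (∅ : Finset G),
        (Subgroup.centralizer {h} : Set G)) = {g : G | g ≠ 1} := by simp
    rw [he]; exact m.total
  | insert a s hx ih =>
    have hsN : (s : Set G) ⊆ Nset m := fun x hx' => hFN (by simp [hx'])
    have haN : a ∈ Nset m := hFN (by simp)
    have hrw : ({g : G | g ≠ 1} ∩ ⋂ h ∈ insert a s, (Subgroup.centralizer {h} : Set G))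
        = ({g : G | g ≠ 1} ∩ (Subgroup.centralizer {a} : Set G)) ∩
          ({g : G | g ≠ 1} ∩ ⋂ h ∈ s, (Subgroup.centralizer {h} : Set G)) := by
      ext g
      simp only [Set.mem_inter_iff, Set.mem_iInter, Finset.mem_insert, Set.mem_setOf_eq]
      constructor
      · rintro ⟨h1, h2⟩
        exact ⟨⟨h1, h2 a (Or.inl rfl)⟩, h1, fun i hi => h2 i (Or.inr hi)⟩
      · rintro ⟨⟨h1, h2⟩, _, h3⟩
        refine ⟨h1, fun i hi => ?_⟩
        rcases hi with rfl | hi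
        · exact h2
        · exact h3 i hi
    rw [hrw]
    exact mean_inter m Set.inter_subset_left Set.inter_subset_left
      (mean_centralizer_of_mem_Nset m haN) (ih hsN)

/-- If `G` is icc and `N ≠ {1}`, the centralizer of every finite subset of
`N` is infinite. -/
theorem stmt_10 {G : Type*} [Group G] (m : ConjInvMean G)
    (hicc : ∀ g : G, g ≠ 1 → {x : G | ∃ h : G, h * g * h⁻¹ = x}.Infinite)
    (hN : Nset m ≠ {1}) (F : Finset G) (hFN : (F : Set G) ⊆ Nset m) :
    {g : G | ∀ h ∈ F, g * h = h * g}.Infinite := by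
  classical
  have hTμ : m.μ ({g : G | g ≠ 1} ∩ ⋂ h ∈ F, (Subgroup.centralizer {h} : Set G)) = 1 :=
    mean_biInter m F hFN
  have hTinf : ({g : G | g ≠ 1} ∩ ⋂ h ∈ F, (Subgroup.centralizer {h} : Set G)).Infinite := by
    intro hfin
    exact mean_finite_false m hicc Set.inter_subset_left hfin hTμ
  apply hTinf.mono
  intro g hg
  simp only [Set.mem_inter_iff, Set.mem_iInter] at hg
  intro h hh
  have := hg.2 h hh
  rw [SetLike.mem_coe, Subgroup.mem_centralizer_singleton_iff] at this
  exact this
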